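/- Let s > 0 and R > 0. There exist constants 0 < C₁, C₂ < ∞ (depending on s and R) such that for all x, y ∈ ℝ² with |x| ≤ R and |y| ≤ R, we have C₁·|x−y|² ≤ d_s(x,y) ≤ C₂·|x−y|, where d_s(x,y) = (1/(2s))·√((√(s²+|x|²) + √(s²+|y|²))² − |x+y|²) − 1. -/

import Mathlib

set_option maxHeartbeats 1000000 in
theorem stmt_9 (s R : ℝ) (hs : 0 < s) (hR : 0 < R) :
    ∃ C₁ C₂ : ℝ, 0 < C₁ ∧ 0 < C₂ ∧
      ∀ x y : EuclideanSpace ℝ (Fin 2), ‖x‖ ≤ R → ‖y‖ ≤ R →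
        C₁ * ‖x - y‖ ^ 2 ≤ (1 / (2 * s)) *
            Real.sqrt ((Real.sqrt (s ^ 2 + ‖x‖ ^ 2) + Real.sqrt (s ^ 2 + ‖y‖ ^ 2)) ^ 2
              - ‖x + y‖ ^ 2) - 1 ∧
          (1 / (2 * s)) *
            Real.sqrt ((Real.sqrt (s ^ 2 + ‖x‖ ^ 2) + Real.sqrt (s ^ 2 + ‖y‖ ^ 2)) ^ 2
              - ‖x + y‖ ^ 2) - 1 ≤ C₂ * ‖x - y‖ := by
  have hM0 : 0 < Real.sqrt (s^2 + R^2) := Real.sqrt_pos.2 (by positivity)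
  set M := Real.sqrt (s^2 + R^2) with hMdef
  have hM2 : M^2 = s^2 + R^2 := Real.sq_sqrt (by positivity)
  have hsM : s ≤ M := by nlinarith only [hM2, hM0, hs, hR]
  refine ⟨s / (2*M^2*(2*M+2*s)), (s^2+R^2)*R/(2*s^4), by positivity, by positivity, ?_⟩
  intro x y hx hy
  have hu : (0:ℝ) ≤ ‖x‖^2 := by positivity
  have hv : (0:ℝ) ≤ ‖y‖^2 := by positivity
  set u := ‖x‖^2 with hudef
  set v := ‖y‖^2 with hvdef
  set t := (inner ℝ x y : ℝ) with htdef
  set d := ‖x - y‖ with hddef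
  have hd0 : (0:ℝ) ≤ d := norm_nonneg _
  have hd2 : d^2 = u - 2*t + v := by
    rw [hddef, hudef, hvdef, htdef, norm_sub_sq_real]
  have hadd : ‖x + y‖^2 = u + 2*t + v := by
    rw [hudef, hvdef, htdef, norm_add_sq_real]
  have huR : u ≤ R^2 := by
    rw [hudef]; nlinarith only [hx, norm_nonneg x]
  have hvR : v ≤ R^2 := by
    rw [hvdef]; nlinarith only [hy, norm_nonneg y]
  have hdR : d ≤ 2*R := by
    calc d ≤ ‖x‖ + ‖y‖ := norm_sub_le x y
    _ ≤ 2*R := by linarith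
  have hCS : t^2 ≤ u*v := by
    have h := real_inner_mul_inner_self_le x y
    rw [real_inner_self_eq_norm_sq, real_inner_self_eq_norm_sq] at h
    rw [htdef, hudef, hvdef]; nlinarith only [h]
  have hlag : u*v - t^2 ≤ R^2 * d^2 := by
    nlinarith only [sq_nonneg (u - t), hd2, hu,
      mul_nonneg (sub_nonneg.2 huR) (sq_nonneg d)]
  have ha2 : (Real.sqrt (s^2 + u))^2 = s^2 + u := Real.sq_sqrt (by positivity)
  have hb2 : (Real.sqrt (s^2 + v))^2 = s^2 + v := Real.sq_sqrt (by positivity)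
  set a := Real.sqrt (s^2 + u) with hadef
  set b := Real.sqrt (s^2 + v) with hbdef
  have hsa : s ≤ a := by
    rw [hadef]; exact (Real.le_sqrt' hs).2 (by linarith)
  have hsb : s ≤ b := by
    rw [hbdef]; exact (Real.le_sqrt' hs).2 (by linarith)
  have haM : a ≤ M := Real.sqrt_le_sqrt (by linarith)
  have hbM : b ≤ M := Real.sqrt_le_sqrt (by linarith)
  have hab2 : (a*b)^2 = (s^2+u)*(s^2+v) := by rw [mul_pow, ha2, hb2]
  have habpos : 0 < a*b := by nlinarith only [hsa, hsb, hs]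
  have habM : a*b ≤ M^2 := by
    nlinarith only [mul_le_mul haM hbM (le_trans hs.le hsb) hM0.le]
  have hPQ : (a*b - s^2 - t) * (a*b + s^2 + t) = s^2*d^2 + (u*v - t^2) := by
    linear_combination hab2 - s^2 * hd2
  have h0 : (s^2 + t)^2 ≤ (a*b)^2 := by
    nlinarith only [hPQ, hCS, mul_nonneg (mul_nonneg hs.le hs.le) (mul_nonneg hd0 hd0)]
  have h1 : s^2 + t ≤ a*b := by nlinarith only [h0, habpos]
  have h0' : t^2 ≤ (a*b)^2 := by
    nlinarith only [hCS, hab2, mul_nonneg (sq_nonneg s) hu, mul_nonneg (sq_nonneg s) hv,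
      sq_nonneg (s^2)]
  have hQlo : 0 ≤ a*b + t := by nlinarith only [h0', habpos]
  have htR : t ≤ R^2 := by
    nlinarith only [hCS, mul_le_mul huR hvR hv (sq_nonneg R), sq_nonneg R]
  have htR' : -(R^2) ≤ t := by
    nlinarith only [hCS, mul_le_mul huR hvR hv (sq_nonneg R), sq_nonneg R]
  have hP0 : 0 ≤ a*b - s^2 - t := by linarith
  have hQup : a*b + s^2 + t ≤ 2*M^2 := by linarith only [habM, htR, hM2.le, hM2.ge]
  have hE : (a+b)^2 - ‖x+y‖^2 = 2*s^2 + 2*(a*b) - 2*t := by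
    linear_combination ha2 + hb2 - hadd
  have hE4 : 4*s^2 ≤ (a+b)^2 - ‖x+y‖^2 := by rw [hE]; linarith
  set D := Real.sqrt ((a+b)^2 - ‖x+y‖^2) with hDdef
  have hD0 : 0 ≤ D := Real.sqrt_nonneg _
  have hD2 : D^2 = 2*s^2 + 2*(a*b) - 2*t := by
    rw [hDdef, Real.sq_sqrt (by nlinarith only [hE4, hs])]; exact hE
  have hDge : 2*s ≤ D := by nlinarith only [hD2, h1, hD0, hs]
  have hDsq : D^2 ≤ 4*M^2 := by linarith only [hD2, habM, htR', hM2.le, hM2.ge]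
  have hDle : D ≤ 2*M := by nlinarith only [hDsq, hD0, hM0]
  have klow : s^2*d^2 ≤ 2*M^2 * (a*b - s^2 - t) := by
    nlinarith only [hPQ, hCS,
      mul_nonneg hP0 (by linarith only [hQup] : (0:ℝ) ≤ 2*M^2 - (a*b + s^2 + t))]
  have kup : s^2*(a*b - s^2 - t) ≤ (s^2+R^2)*d^2 := by
    nlinarith only [hPQ, hlag, mul_nonneg hP0 hQlo]
  have hDP : (D - 2*s)*(D + 2*s) = 2*(a*b - s^2 - t) := by linear_combination hD2
  have h5 : 2*(a*b - s^2 - t) ≤ (2*M+2*s)*(D - 2*s) := by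
    nlinarith only [hDP,
      mul_nonneg (by linarith only [hDge] : (0:ℝ) ≤ D - 2*s)
        (by linarith only [hDle] : (0:ℝ) ≤ 2*M - D)]
  have h6 : 4*s*(D - 2*s) ≤ 2*(a*b - s^2 - t) := by
    nlinarith only [hDP, sq_nonneg (D - 2*s)]
  have hrw : 1/(2*s) * D - 1 = (D - 2*s)/(2*s) := by field_simp
  rw [hrw]
  constructor
  · rw [div_mul_eq_mul_div, div_le_div_iff₀ (by positivity) (by positivity)]
    nlinarith only [klow, mul_le_mul_of_nonneg_left h5 (sq_nonneg M)]
  · rw [div_mul_eq_mul_div, div_le_div_iff₀ (by positivity) (by positivity)]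
    have hd2R : d^2 ≤ 2*R*d := by nlinarith only [hdR, hd0]
    have h7 : 4*s^3*(D - 2*s) ≤ 4*(s^2+R^2)*R*d := by
      nlinarith only [mul_le_mul_of_nonneg_left h6 (sq_nonneg s), kup,
        mul_le_mul_of_nonneg_left hd2R (by positivity : (0:ℝ) ≤ s^2+R^2)]
    nlinarith only [mul_le_mul_of_nonneg_left h7 hs.le]
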